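/- Let A be a commutative ring, I a set, R = A[(X_i)_{i∈I}] the polynomial ring, and 𝔞 ⊆ R a finitely generated monomial ideal. Then Γ_𝔞 = Γ_{⌊𝔞⌋}, i.e., for every R-module M and every x ∈ M there exists n ∈ ℕ with 𝔞^n ⊆ Ann_R(x) if and only if there exists n ∈ ℕ with ⌊𝔞⌋^n ⊆ Ann_R(x). (Proposition 2.10 a).) -/

import Mathlib

open MvPolynomial

/-- `suppInd μ` is the characteristic function of the support of `μ`,
so that `X^(suppInd μ) = ∏_{i : μ i > 0} X i`. -/
noncomputable def suppInd {I : Type v} (μ : I →₀ ℕ) : I →₀ ℕ :=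
  μ.mapRange (fun n => if n = 0 then 0 else 1) (by simp)

/-- A monomial ideal of `A[(X_i)_{i ∈ I}]` is an ideal generated by a set of monomials. -/
def IsMonomialIdeal {A : Type u} [CommRing A] {I : Type v}
    (𝔞 : Ideal (MvPolynomial I A)) : Prop :=
  ∃ E : Set (I →₀ ℕ), 𝔞 = Ideal.span ((fun μ => monomial μ (1 : A)) '' E)

/-- `⌊𝔞⌋` is the ideal generated by the monomials `X^(suppInd μ)` for all monomials
`X^μ ∈ 𝔞`. -/
noncomputable def mvFloor {A : Type u} [CommRing A] {I : Type v}
    (𝔞 : Ideal (MvPolynomial I A)) : Ideal (MvPolynomial I A) :=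
  Ideal.span {f | ∃ μ : I →₀ ℕ, monomial μ (1 : A) ∈ 𝔞 ∧ f = monomial (suppInd μ) (1 : A)}

lemma suppInd_le {I : Type v} (μ : I →₀ ℕ) : suppInd μ ≤ μ := by
  intro i
  simp only [suppInd, Finsupp.mapRange_apply]
  split_ifs with h <;> omega

lemma suppInd_mono {I : Type v} {μ ν : I →₀ ℕ} (h : μ ≤ ν) : suppInd μ ≤ suppInd ν := by
  intro i
  have := h i
  simp only [suppInd, Finsupp.mapRange_apply]
  split_ifs <;> omega

lemma monomial_dvd_monomial_of_le {A : Type u} [CommRing A] {I : Type v} {μ ν : I →₀ ℕ}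
    (h : μ ≤ ν) : monomial μ (1 : A) ∣ monomial ν (1 : A) := by
  refine ⟨monomial (ν - μ) 1, ?_⟩
  rw [monomial_mul, one_mul, add_tsub_cancel_of_le h]

/-- In a nontrivial ring, a monomial lies in a monomial ideal only if some generating
exponent is dominated by its exponent. -/
lemma exists_le_of_monomial_mem_span {A : Type u} [CommRing A] [Nontrivial A] {I : Type v}
    {E : Set (I →₀ ℕ)} {ν : I →₀ ℕ}
    (hmem : monomial ν (1 : A) ∈ Ideal.span ((fun μ => monomial μ (1 : A)) '' E)) :
    ∃ μ ∈ E, μ ≤ ν := by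
  have key : ∀ f ∈ Ideal.span ((fun μ => monomial μ (1 : A)) '' E),
      ∀ ν : I →₀ ℕ, coeff ν f ≠ 0 → ∃ μ ∈ E, μ ≤ ν := by
    classical
    intro f hf
    refine Submodule.span_induction ?_ ?_ ?_ ?_ hf
    · rintro _ ⟨μ, hμE, rfl⟩ ν hν
      rw [coeff_monomial] at hν
      by_cases h : μ = ν
      · exact ⟨μ, hμE, h ▸ le_rfl⟩
      · simp [h] at hν
    · intro ν hν
      simp at hν
    · intro f g _ _ hf hg ν hν
      by_cases hcf : coeff ν f ≠ 0
      · exact hf ν hcf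
      · push_neg at hcf
        exact hg ν (by simpa [coeff_add, hcf] using hν)
    · intro r f _ hf ν hν
      rw [smul_eq_mul, coeff_mul] at hν
      obtain ⟨⟨a, b⟩, hab, hne⟩ := Finset.exists_ne_zero_of_sum_ne_zero hν
      have hb : coeff b f ≠ 0 := fun h => hne (by simp [h])
      obtain ⟨μ, hμE, hμb⟩ := hf b hb
      refine ⟨μ, hμE, hμb.trans ?_⟩
      rw [Finset.HasAntidiagonal.mem_antidiagonal] at hab
      calc b ≤ a + b := le_add_self
        _ = ν := hab
  refine key _ hmem ν ?_
  classical
  simp [coeff_monomial]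

lemma suppInd_monomial_mem_radical {A : Type u} [CommRing A] {I : Type v}
    {𝔞 : Ideal (MvPolynomial I A)} {μ : I →₀ ℕ} (hμ : monomial μ (1 : A) ∈ 𝔞) :
    monomial (suppInd μ) (1 : A) ∈ 𝔞.radical := by
  set n : ℕ := (μ.sum fun _ m => m) + 1 with hn
  refine ⟨n, ?_⟩
  have hle : μ ≤ n • suppInd μ := by
    intro i
    simp only [Finsupp.smul_apply, suppInd, Finsupp.mapRange_apply, smul_eq_mul]
    by_cases h : μ i = 0
    · simp [h]
    · have hi : i ∈ μ.support := Finsupp.mem_support_iff.mpr h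
      have h2 : μ i ≤ μ.sum fun _ m => m := Finset.single_le_sum (fun _ _ => Nat.zero_le _) hi
      rw [if_neg h, mul_one]
      omega
  have : (monomial (suppInd μ) (1 : A)) ^ n =
      monomial μ 1 * monomial (n • suppInd μ - μ) 1 := by
    rw [monomial_pow, one_pow, monomial_mul, one_mul, add_tsub_cancel_of_le hle]
  rw [this]
  exact Ideal.mul_mem_right _ _ hμ

/-- (Proposition 2.10 a)): for a finitely generated monomial ideal
`𝔞` of `R = A[(X_i)_{i ∈ I}]`, the torsion functors `Γ_𝔞` and `Γ_⌊𝔞⌋` coincide. -/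
theorem torsion_eq_torsion_floor {A : Type u} [CommRing A] {I : Type v}
    (𝔞 : Ideal (MvPolynomial I A)) (h : IsMonomialIdeal 𝔞) (hfg : 𝔞.FG) :
    ∀ (M : Type (max u v)) [AddCommGroup M] [Module (MvPolynomial I A) M] (x : M),
      (∃ n : ℕ, 𝔞 ^ n ≤ Ideal.torsionOf (MvPolynomial I A) M x) ↔
        (∃ n : ℕ, (mvFloor 𝔞) ^ n ≤ Ideal.torsionOf (MvPolynomial I A) M x) := by
  intro M _ _ x
  obtain ⟨E, hE⟩ := h
  -- 𝔞 ≤ ⌊𝔞⌋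
  have ha_le_floor : 𝔞 ≤ mvFloor 𝔞 := by
    conv_lhs => rw [hE]
    rw [Ideal.span_le]
    rintro _ ⟨μ, hμE, rfl⟩
    show monomial μ (1 : A) ∈ mvFloor 𝔞
    have hμa : monomial μ (1 : A) ∈ 𝔞 := by
      rw [hE]; exact Ideal.subset_span ⟨μ, hμE, rfl⟩
    have hsq : monomial (suppInd μ) (1 : A) ∈ mvFloor 𝔞 :=
      Ideal.subset_span ⟨μ, hμa, rfl⟩
    obtain ⟨c, hc⟩ := monomial_dvd_monomial_of_le (A := A) (suppInd_le μ)
    rw [hc]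
    exact Ideal.mul_mem_right _ _ hsq
  rcases subsingleton_or_nontrivial A with hA | hA
  · have : Subsingleton (MvPolynomial I A) := inferInstance
    have hx : x = 0 := by
      calc x = (1 : MvPolynomial I A) • x := (one_smul _ x).symm
        _ = (0 : MvPolynomial I A) • x := by rw [Subsingleton.elim (1 : MvPolynomial I A) 0]
        _ = 0 := zero_smul _ x
    constructor <;> intro _ <;> exact ⟨0, by simp [hx, Ideal.torsionOf]⟩
  · -- extract a finite generating subset of monomials
    obtain ⟨T, hT⟩ := hfg
    have hsub : ∀ t ∈ T, ∃ U : Finset (MvPolynomial I A),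
        ↑U ⊆ (fun μ => monomial μ (1 : A)) '' E ∧ t ∈ Ideal.span (U : Set (MvPolynomial I A)) := by
      intro t ht
      have h1 : t ∈ 𝔞 := by rw [← hT]; exact Ideal.subset_span ht
      rw [hE] at h1
      exact Submodule.mem_span_finite_of_mem_span h1
    choose U hU₁ hU₂ using hsub
    classical
    set V : Finset (MvPolynomial I A) := T.attach.biUnion (fun t => U t t.2) with hV
    have hV_sub : (V : Set (MvPolynomial I A)) ⊆ (fun μ => monomial μ (1 : A)) '' E := by
      intro v hv
      simp only [hV, Finset.coe_biUnion, Set.mem_iUnion] at hv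
      obtain ⟨t, _, hvt⟩ := hv
      exact hU₁ t t.2 hvt
    have hspanV : 𝔞 = Ideal.span (V : Set (MvPolynomial I A)) := by
      apply le_antisymm
      · rw [← hT, Ideal.span_le]
        intro t ht
        refine Ideal.span_mono ?_ (hU₂ t ht)
        intro v hv
        simp only [hV, Finset.coe_biUnion, Set.mem_iUnion]
        exact ⟨⟨t, ht⟩, Finset.mem_attach _ _, hv⟩
      · rw [Ideal.span_le]
        intro v hv
        rw [hE]
        exact Ideal.subset_span (hV_sub hv)
    -- E' : the finite set of exponents of V
    set E' : Set (I →₀ ℕ) := E ∩ (fun μ => monomial μ (1 : A)) ⁻¹' (V : Set (MvPolynomial I A))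
      with hE'
    have hE'_fin : E'.Finite := by
      apply Set.Finite.subset (Set.Finite.preimage ?_ V.finite_toSet) Set.inter_subset_right
      exact Set.injOn_of_injective (monomial_left_injective one_ne_zero)
    have hE'_image : (fun μ => monomial μ (1 : A)) '' E' = (V : Set (MvPolynomial I A)) := by
      apply le_antisymm
      · rintro _ ⟨μ, ⟨_, hμV⟩, rfl⟩
        exact hμV
      · intro v hv
        obtain ⟨μ, hμE, rfl⟩ := hV_sub hv
        exact ⟨μ, ⟨hμE, hv⟩, rfl⟩
    have hspanE' : 𝔞 = Ideal.span ((fun μ => monomial μ (1 : A)) '' E') := by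
      rw [hE'_image, hspanV]
    -- 𝔟 : the fg approximation of the floor
    set 𝔟 : Ideal (MvPolynomial I A) :=
      Ideal.span ((fun μ => monomial (suppInd μ) (1 : A)) '' E') with h𝔟
    have hfloor_le_b : mvFloor 𝔞 ≤ 𝔟 := by
      rw [mvFloor, Ideal.span_le]
      rintro _ ⟨ν, hν, rfl⟩
      obtain ⟨μ, hμE', hμν⟩ := exists_le_of_monomial_mem_span (by rw [← hspanE']; exact hν)
      obtain ⟨c, hc⟩ := monomial_dvd_monomial_of_le (A := A) (suppInd_mono hμν)
      rw [hc]
      exact Ideal.mul_mem_right _ _ (Ideal.subset_span ⟨μ, hμE', rfl⟩)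
    have hb_le_rad : 𝔟 ≤ 𝔞.radical := by
      rw [h𝔟, Ideal.span_le]
      rintro _ ⟨μ, hμE', rfl⟩
      have hm : monomial μ (1 : A) ∈ 𝔞 := by
        rw [hspanE']; exact Ideal.subset_span ⟨μ, hμE', rfl⟩
      exact suppInd_monomial_mem_radical hm
    have hb_fg : 𝔟.FG := Submodule.fg_span (hE'_fin.image _)
    obtain ⟨m, hm⟩ := Ideal.exists_pow_le_of_le_radical_of_fg hb_le_rad hb_fg
    constructor
    · rintro ⟨n, hn⟩
      refine ⟨m * n, ?_⟩
      calc (mvFloor 𝔞) ^ (m * n) ≤ 𝔟 ^ (m * n) := Ideal.pow_right_mono hfloor_le_b _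
        _ = (𝔟 ^ m) ^ n := by rw [← pow_mul]
        _ ≤ 𝔞 ^ n := Ideal.pow_right_mono hm n
        _ ≤ _ := hn
    · rintro ⟨n, hn⟩
      exact ⟨n, le_trans (Ideal.pow_right_mono ha_le_floor n) hn⟩
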